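/- Tail bound for geometric-type comparison: Fix p ∈ (0,1) and integers k ≥ 2, and let (τ_j) be random variables such that conditionally on τ_k, P(τ_{k+1} > τ_k + j | τ_k) ≤ ∏_{i=0}^{j-1}(1 - p(k-1)/(τ_k+i)) for all j ≥ 0 (with the empty product equal to 1), where τ_k ≥ k almost surely. Then almost surely P(τ_{k+1} > τ_k + j | τ_k) ≤ (1 + j/τ_k)^{-p(k-1)}, and if p(k-1) > 1 then E[τ_{k+1} - τ_k | τ_k] ≤ (1 + O(1/k))·τ_k/(pk) + 1, with deterministic implied constant. -/

import Mathlib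

private lemma tail_rpow_bound {a τ : ℝ} (ha : 0 ≤ a) (haτ : a ≤ τ) (hτ : 0 < τ) (j : ℕ) :
    ∏ i ∈ Finset.range j, (1 - a / (τ + i)) ≤ (1 + (j : ℝ) / τ) ^ (-a) := by
  have hτi : ∀ i : ℕ, 0 < τ + i := fun i => by positivity
  have hfac : ∀ i : ℕ, 0 ≤ 1 - a / (τ + i) := by
    intro i
    have h1 : a / (τ + i) ≤ 1 := by
      rw [div_le_one (hτi i)]
      have : (0:ℝ) ≤ i := Nat.cast_nonneg i
      linarith
    linarith
  have h1 : ∏ i ∈ Finset.range j, (1 - a / (τ + i))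
      ≤ ∏ i ∈ Finset.range j, Real.exp (-(a / (τ + i))) := by
    apply Finset.prod_le_prod (fun i _ => hfac i)
    intro i _
    have := Real.add_one_le_exp (-(a / (τ + i)))
    linarith
  have h2 : ∏ i ∈ Finset.range j, Real.exp (-(a / (τ + i)))
      = Real.exp (-(a * ∑ i ∈ Finset.range j, 1 / (τ + i))) := by
    rw [← Real.exp_sum]
    congr 1
    rw [Finset.mul_sum, ← Finset.sum_neg_distrib]
    exact Finset.sum_congr rfl fun i _ => by rw [mul_one_div]
  have hS : Real.log (1 + (j:ℝ) / τ) ≤ ∑ i ∈ Finset.range j, 1 / (τ + i) := by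
    have key : ∀ i : ℕ, Real.log (τ + ((i:ℝ)+1)) - Real.log (τ + i) ≤ 1 / (τ + i) := by
      intro i
      have hpos : (0:ℝ) < τ + i := hτi i
      have hpos1 : (0:ℝ) < τ + ((i:ℝ)+1) := by positivity
      have e1 : Real.log (τ + ((i:ℝ)+1)) - Real.log (τ + i)
          = Real.log ((τ + ((i:ℝ)+1)) / (τ + i)) := by
        rw [Real.log_div hpos1.ne' hpos.ne']
      rw [e1]
      have h3 := Real.log_le_sub_one_of_pos (show (0:ℝ) < (τ + ((i:ℝ)+1)) / (τ + i) by positivity)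
      have h4 : (τ + ((i:ℝ)+1)) / (τ + i) - 1 = 1 / (τ + i) := by
        field_simp
        ring
      linarith
    have tele : ∑ i ∈ Finset.range j,
        (Real.log (τ + ((i+1:ℕ):ℝ)) - Real.log (τ + (i:ℝ)))
        = Real.log (τ + (j:ℝ)) - Real.log (τ + ((0:ℕ):ℝ)) :=
      Finset.sum_range_sub (fun i : ℕ => Real.log (τ + (i:ℝ))) j
    have e2 : Real.log (1 + (j:ℝ)/τ) = Real.log (τ + (j:ℝ)) - Real.log τ := by
      rw [show (1 + (j:ℝ)/τ) = (τ + (j:ℝ))/τ by field_simp]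
      exact Real.log_div (by positivity) hτ.ne'
    calc Real.log (1 + (j:ℝ)/τ) = Real.log (τ + (j:ℝ)) - Real.log τ := e2
      _ = ∑ i ∈ Finset.range j,
          (Real.log (τ + ((i+1:ℕ):ℝ)) - Real.log (τ + (i:ℝ))) := by
            rw [tele]; norm_num
      _ ≤ ∑ i ∈ Finset.range j, 1 / (τ + i) := by
            apply Finset.sum_le_sum
            intro i _
            have := key i
            push_cast
            push_cast at this
            linarith
  have h3 : Real.exp (-(a * ∑ i ∈ Finset.range j, 1 / (τ + i)))
      ≤ Real.exp (-(a * Real.log (1 + (j:ℝ)/τ))) := by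
    apply Real.exp_le_exp.mpr
    have := mul_le_mul_of_nonneg_left hS ha
    linarith
  have h4 : (1 + (j:ℝ)/τ) ^ (-a) = Real.exp (-(a * Real.log (1 + (j:ℝ)/τ))) := by
    rw [Real.rpow_def_of_pos (by positivity)]
    ring_nf
  calc ∏ i ∈ Finset.range j, (1 - a / (τ + i)) ≤ _ := h1
    _ = _ := h2
    _ ≤ _ := h3
    _ = (1 + (j:ℝ)/τ) ^ (-a) := h4.symm

private lemma step_bound {b τ : ℝ} (hb : 0 < b) (hτ : 0 < τ) (j : ℕ) :
    (1 + ((j:ℝ)+1)/τ) ^ (-(b+1))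
      ≤ (τ / b) * ((1 + (j:ℝ)/τ) ^ (-b) - (1 + ((j:ℝ)+1)/τ) ^ (-b)) := by
  set x := 1 + ((j:ℝ)+1)/τ with hxdef
  set y := 1 + (j:ℝ)/τ with hydef
  have hy0 : 0 < y := by positivity
  have hx0 : 0 < x := by positivity
  have hxy : x - y = 1/τ := by rw [hxdef, hydef]; field_simp; ring
  have hyx : y < x := by
    rw [← sub_pos, hxy]; positivity
  -- log (x/y) ≥ 1 - y/x
  have hlog : 1 - y/x ≤ Real.log (x/y) := by
    have h1 : Real.log (y/x) ≤ y/x - 1 := Real.log_le_sub_one_of_pos (by positivity)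
    have h2 : Real.log (x/y) = - Real.log (y/x) := by
      rw [← Real.log_inv]
      congr 1
      field_simp
    linarith
  -- (x/y)^b ≥ 1 + b * log(x/y)
  have hexp : 1 + b * Real.log (x/y) ≤ (x/y) ^ b := by
    rw [Real.rpow_def_of_pos (by positivity)]
    have := Real.add_one_le_exp (Real.log (x/y) * b)
    linarith
  have hxb : 0 < x ^ (-b) := Real.rpow_pos_of_pos hx0 _
  have hkey : b * (x - y) * x ^ (-(b+1)) ≤ y ^ (-b) - x ^ (-b) := by
    have e1 : y ^ (-b) = x ^ (-b) * (x/y) ^ b := by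
      rw [Real.div_rpow hx0.le hy0.le, Real.rpow_neg hx0.le, Real.rpow_neg hy0.le]
      have hxbb : (0:ℝ) < x ^ b := Real.rpow_pos_of_pos hx0 _
      have hybb : (0:ℝ) < y ^ b := Real.rpow_pos_of_pos hy0 _
      field_simp
    have e2 : x ^ (-(b+1)) = x ^ (-b) / x := by
      rw [show -(b+1) = -b + (-1) by ring, Real.rpow_add hx0, Real.rpow_neg_one]
      rw [div_eq_mul_inv]
    have hbd : 1 + b * (1 - y/x) ≤ (x/y) ^ b := by
      have := mul_le_mul_of_nonneg_left hlog hb.le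
      linarith
    rw [e1, e2]
    have h3 := mul_le_mul_of_nonneg_left hbd hxb.le
    have h4 : b * (x - y) * (x ^ (-b) / x) = x ^ (-b) * (b * (1 - y/x)) := by
      field_simp
    rw [h4]
    linarith
  have h5 : b * (1/τ) * x ^ (-(b+1)) ≤ y ^ (-b) - x ^ (-b) := by
    rw [← hxy]; exact hkey
  calc x ^ (-(b+1)) = (τ/b) * (b * (1/τ) * x ^ (-(b+1))) := by
        field_simp
    _ ≤ (τ/b) * (y ^ (-b) - x ^ (-b)) :=
        mul_le_mul_of_nonneg_left h5 (by positivity)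

/-- Tail bound for geometric-type comparison: if conditionally on `τ_k = τ` (with `τ ≥ k`),
the tail probabilities `g j` of `τ_{k+1} - τ_k` satisfy
`g j ≤ ∏_{i=0}^{j-1}(1 - p(k-1)/(τ+i))`, then `g j ≤ (1 + j/τ)^{-p(k-1)}`, and if
`p(k-1) > 1` then the conditional expectation `∑_{j≥0} g j` is at most
`(1 + C/k)·τ/(pk) + 1` for a deterministic constant `C`. -/
theorem geometric_tail_bound (p : ℝ) (hp : p ∈ Set.Ioo (0 : ℝ) 1) :
    ∃ C > 0, ∀ k : ℕ, 2 ≤ k → ∀ τ : ℝ, (k : ℝ) ≤ τ →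
      ∀ g : ℕ → ℝ, (∀ j, 0 ≤ g j) →
      (∀ j : ℕ, g j ≤ ∏ i ∈ Finset.range j, (1 - p * ((k : ℝ) - 1) / (τ + i))) →
      (∀ j : ℕ, g j ≤ (1 + (j : ℝ) / τ) ^ (-(p * ((k : ℝ) - 1)))) ∧
      (1 < p * ((k : ℝ) - 1) →
        ∑' j : ℕ, g j ≤ (1 + C / k) * τ / (p * k) + 1) := by
  obtain ⟨hp0, hp1⟩ := hp
  set m : ℕ := Nat.floor (1/p) with hm
  have hδ : 0 < p * ((m:ℝ) + 1) - 1 := by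
    have h1 : (1:ℝ)/p < (m:ℝ) + 1 := Nat.lt_floor_add_one (1/p)
    have h2 : 1 < ((m:ℝ)+1) * p := (div_lt_iff₀ hp0).mp h1
    nlinarith
  set δ : ℝ := p * ((m:ℝ) + 1) - 1 with hδdef
  set C : ℝ := (p+1)/p + ((m:ℝ)+2)*(p+1)/δ with hCdef
  clear_value C
  have hA0 : (0:ℝ) ≤ (p+1)/p := by positivity
  have hB0 : (0:ℝ) ≤ ((m:ℝ)+2)*(p+1)/δ := by
    apply div_nonneg (by positivity) hδ.le
  have hCpos : 0 < C := by
    have : (0:ℝ) < (p+1)/p := div_pos (by linarith) hp0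
    rw [hCdef]; linarith
  refine ⟨C, hCpos, ?_⟩
  intro k hk τ hτ g hg0 hg
  have hk1 : (1:ℝ) ≤ (k:ℝ) - 1 := by
    have : (2:ℝ) ≤ (k:ℝ) := by exact_mod_cast hk
    linarith
  set a : ℝ := p * ((k:ℝ) - 1) with ha
  clear_value a
  have ha0 : 0 < a := by rw [ha]; nlinarith
  have hτ0 : 0 < τ := by linarith
  have haτ : a ≤ τ := by rw [ha]; nlinarith
  have htail : ∀ j : ℕ, g j ≤ (1 + (j:ℝ)/τ) ^ (-a) :=
    fun j => (hg j).trans (tail_rpow_bound ha0.le haτ hτ0 j)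
  refine ⟨htail, ?_⟩
  intro hpa
  set b : ℝ := a - 1 with hb
  clear_value b
  have hb0 : 0 < b := by rw [hb]; linarith
  have key : ∀ j : ℕ, g (j+1)
      ≤ (τ/b) * ((1 + (j:ℝ)/τ) ^ (-b) - (1 + ((j+1:ℕ):ℝ)/τ) ^ (-b)) := by
    intro j
    have h2 := step_bound hb0 hτ0 j
    have hc : ((j+1:ℕ):ℝ) = (j:ℝ)+1 := by push_cast; ring
    have hba : -(b+1) = -a := by rw [hb]; ring
    rw [hc]
    calc g (j+1) ≤ (1 + ((j+1:ℕ):ℝ)/τ) ^ (-a) := htail (j+1)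
      _ = (1 + ((j:ℝ)+1)/τ) ^ (-(b+1)) := by rw [hc, hba]
      _ ≤ _ := h2
  have hpartial : ∀ n : ℕ, ∑ j ∈ Finset.range n, g j ≤ 1 + τ/b := by
    intro n
    cases n with
    | zero => simp; positivity
    | succ n' =>
      rw [Finset.sum_range_succ']
      have h0 : g 0 ≤ 1 := by have := hg 0; simpa using this
      have tele : ∑ i ∈ Finset.range n',
          ((1 + (i:ℝ)/τ) ^ (-b) - (1 + ((i+1:ℕ):ℝ)/τ) ^ (-b))
          = (1 + ((0:ℕ):ℝ)/τ) ^ (-b) - (1 + (n':ℝ)/τ) ^ (-b) :=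
        Finset.sum_range_sub' (fun i : ℕ => (1 + (i:ℝ)/τ) ^ (-b)) n'
      have hsum : ∑ j ∈ Finset.range n', g (j+1)
          ≤ (τ/b) * ((1 + ((0:ℕ):ℝ)/τ) ^ (-b) - (1 + (n':ℝ)/τ) ^ (-b)) := by
        rw [← tele, Finset.mul_sum]
        exact Finset.sum_le_sum fun j _ => key j
      have hH0 : (1 + ((0:ℕ):ℝ)/τ) ^ (-b) = 1 := by norm_num
      have hHn : (0:ℝ) ≤ (1 + (n':ℝ)/τ) ^ (-b) := Real.rpow_nonneg (by positivity) _
      have hτb : (0:ℝ) ≤ τ/b := by positivity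
      rw [hH0] at hsum
      nlinarith [hsum]
  have hsummable : Summable g := summable_of_sum_range_le hg0 hpartial
  have htsum : ∑' j, g j ≤ 1 + τ/b := Summable.tsum_le_of_sum_range_le hsummable hpartial
  -- arithmetic: τ/b ≤ (1 + C/k)*τ/(p*k)
  have h1p : (1:ℝ)/p < (k:ℝ) - 1 := by
    rw [div_lt_iff₀ hp0]; nlinarith
  have hmk : m + 2 ≤ k := by
    have h2 : (m:ℝ) < (k:ℝ) - 1 := lt_of_le_of_lt (Nat.floor_le (by positivity)) h1p
    have h3 : ((m:ℕ):ℝ) + 1 < (k:ℝ) := by linarith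
    have h4 : m + 1 < k := by exact_mod_cast h3
    omega
  have hkmR : (m:ℝ) + 2 ≤ (k:ℝ) := by exact_mod_cast hmk
  have hk0 : (0:ℝ) < (k:ℝ) := by linarith
  have hC : (k:ℝ) * (p+1) ≤ C * b := by
    have hA : ((p+1)/p) * p = p + 1 := by field_simp
    have hB : (((m:ℝ)+2)*(p+1)/δ) * δ = ((m:ℝ)+2)*(p+1) := by field_simp
    have e : b = δ + p * ((k:ℝ) - ((m:ℝ)+2)) := by
      rw [hb, ha, hδdef]; ring
    have hs : (0:ℝ) ≤ (k:ℝ) - ((m:ℝ)+2) := by linarith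
    have hAs : ((p+1)/p) * p * ((k:ℝ) - ((m:ℝ)+2)) = (p+1) * ((k:ℝ) - ((m:ℝ)+2)) := by
      rw [hA]
    rw [hCdef, e]
    nlinarith [mul_nonneg hA0 hδ.le, mul_nonneg hB0 (mul_nonneg hp0.le hs), hAs, hB]
  have hfinal : τ/b ≤ (1 + C/(k:ℝ)) * τ / (p * (k:ℝ)) := by
    rw [div_le_div_iff₀ hb0 (by positivity)]
    have h7 : (p * (k:ℝ)) * (k:ℝ) ≤ ((k:ℝ) + C) * b := by
      have : (k:ℝ) * b ≥ (k:ℝ) * (p * ((k:ℝ)-1) - 1) := by rw [hb, ha]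
      linarith [hC, this]
    have h8 : (1 + C/(k:ℝ)) = ((k:ℝ) + C)/(k:ℝ) := by field_simp
    rw [h8, div_mul_eq_mul_div, div_mul_eq_mul_div, le_div_iff₀ hk0]
    have h9 := mul_le_mul_of_nonneg_left h7 hτ0.le
    linarith [h9]
  linarith [htsum, hfinal]
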